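/- Every Lyndon pair is strictly ≻-greater than all of its nontrivial rotations; equivalently, all rotations of a reduced maximal pair are pairwise distinct. -/

import Mathlib

/-- Right rotation by `i` of a pair in `Σ^n × ℤ/k`. -/
def rotPair (s k : ℕ) (i : ℕ) (P : List (Fin s) × ZMod k) : List (Fin s) × ZMod k :=
  (P.1.rotate i, P.2 + (i : ZMod k))

/-- The order ≻ : `P ≻ Q` iff (same second component and `P.1 > Q.1` lexicographically)
or `(k-1-P.2) > (k-1-Q.2)`, i.e. `P.2 < Q.2` as residues. -/
def succPair (s k : ℕ) (P Q : List (Fin s) × ZMod k) : Prop :=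
  (List.Lex (· < ·) Q.1 P.1 ∧ P.2 = Q.2) ∨ P.2.val < Q.2.val

/-- A pair is maximal when no rotation of it is ≻-greater than it. -/
def isMaxPair (s k : ℕ) (P : List (Fin s) × ZMod k) : Prop :=
  ∀ i : ℕ, ¬ succPair s k (rotPair s k i P) P

/-- Length of the reduction of a word: the least `p` with `k ∣ p`, `p ∣ |A|`
and `A = (A.take p)^{|A|/p}`. -/
noncomputable def reduceLen (s k : ℕ) (A : List (Fin s)) : ℕ :=
  sInf {p : ℕ | k ∣ p ∧ p ∣ A.length ∧
    A = (List.replicate (A.length / p) (A.take p)).flatten}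

/-- The reduction of a word. -/
noncomputable def reduceWord (s k : ℕ) (A : List (Fin s)) : List (Fin s) := A.take (reduceLen s k A)

/-- Lyndon words (of Lyndon pairs `⟨w,0⟩`): reductions of maximal pairs when `k ∣ n`,
expansions of maximal pairs when `n ∣ k`. -/
def isLyndonWord (s n k : ℕ) (w : List (Fin s)) : Prop :=
  (k ∣ n ∧ ∃ A : List (Fin s), A.length = n ∧ isMaxPair s k (A, (0 : ZMod k)) ∧
      w = reduceWord s k A) ∨
  (n ∣ k ∧ ∃ A : List (Fin s), A.length = n ∧ isMaxPair s k (A, (0 : ZMod k)) ∧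
      w = (List.replicate (k / n) A).flatten)



section Aux
variable {α : Type*}

lemma flatten_replicate_flatten (t : List α) : ∀ (a b : ℕ),
    (List.replicate a (List.replicate b t).flatten).flatten
      = (List.replicate (a * b) t).flatten := by
  intro a
  induction a with
  | zero => simp
  | succ a ih =>
      intro b
      simp only [List.replicate_succ, List.flatten_cons, ih, Nat.succ_mul]
      rw [Nat.add_comm (a*b) b, List.replicate_add, List.flatten_append]

lemma flatten_comm_take (w : List α) (i : ℕ) (hi : i ≤ w.length) : ∀ m,
    (List.replicate m w).flatten ++ w.take i
      = w.take i ++ (List.replicate m (w.rotate i)).flatten := by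
  intro m
  induction m with
  | zero => simp
  | succ m ih =>
      simp only [List.replicate_succ, List.flatten_cons, List.append_assoc, ih]
      rw [← List.append_assoc, ← List.append_assoc]
      congr 1
      rw [List.rotate_eq_drop_append_take hi]
      have hsplit : w ++ w.take i = (w.take i ++ w.drop i) ++ w.take i := by
        rw [List.take_append_drop]
      rw [hsplit, List.append_assoc]

lemma rotate_flatten_replicate (w : List α) (i m : ℕ) (hi : i ≤ w.length) (hm : 0 < m) :
    ((List.replicate m w).flatten).rotate i = (List.replicate m (w.rotate i)).flatten := by
  obtain ⟨m, rfl⟩ : ∃ m', m = m' + 1 := ⟨m - 1, (Nat.succ_pred_eq_of_pos hm).symm⟩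
  have hi' : i ≤ ((List.replicate (m+1) w).flatten).length := by
    simp [List.length_flatten, List.map_replicate, List.sum_replicate, smul_eq_mul]
    calc i ≤ w.length := hi
    _ ≤ (m+1) * w.length := Nat.le_mul_of_pos_left _ (Nat.succ_pos m)
  rw [List.rotate_eq_drop_append_take hi']
  simp only [List.replicate_succ, List.flatten_cons]
  rw [List.drop_append_of_le_length hi, List.take_append_of_le_length hi]
  rw [List.append_assoc, flatten_comm_take w i hi m, ← List.append_assoc]
  rw [← List.rotate_eq_drop_append_take hi]

lemma lex_append [LinearOrder α] :
    ∀ {u v : List α}, List.Lex (· < ·) u v → u.length = v.length →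
      ∀ x y, List.Lex (· < ·) (u ++ x) (v ++ y) := by
  intro u v h
  induction h with
  | nil => intro hlen; simp at hlen
  | @rel a l₁ b l₂ hab => intro _ x y; exact List.Lex.rel hab
  | @cons a l₁ l₂ h ih =>
      intro hlen x y
      exact List.Lex.cons (ih (by simpa using hlen) x y)

lemma lex_pow [LinearOrder α] (u v : List α) (h : List.Lex (· < ·) u v)
    (hlen : u.length = v.length) (m : ℕ) (hm : 0 < m) :
    List.Lex (· < ·) ((List.replicate m u).flatten) ((List.replicate m v).flatten) := by
  obtain ⟨m, rfl⟩ : ∃ m', m = m' + 1 := ⟨m - 1, (Nat.succ_pred_eq_of_pos hm).symm⟩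
  simp only [List.replicate_succ, List.flatten_cons]
  exact lex_append h hlen _ _

lemma lex_trichotomy [LinearOrder α] : ∀ (u v : List α),
    List.Lex (· < ·) u v ∨ u = v ∨ List.Lex (· < ·) v u := by
  intro u
  induction u with
  | nil => intro v; cases v with
      | nil => exact Or.inr (Or.inl rfl)
      | cons b t => exact Or.inl List.Lex.nil
  | cons a t ih =>
      intro v
      cases v with
      | nil => exact Or.inr (Or.inr List.Lex.nil)
      | cons b t' =>
          rcases lt_trichotomy a b with h | rfl | h
          · exact Or.inl (List.Lex.rel h)
          · rcases ih t' with h | rfl | h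
            · exact Or.inl (List.Lex.cons h)
            · exact Or.inr (Or.inl rfl)
            · exact Or.inr (Or.inr (List.Lex.cons h))
          · exact Or.inr (Or.inr (List.Lex.rel h))

lemma eq_flatten_of_rotate_eq : ∀ (w : List α) (d : ℕ), 0 < d → d ∣ w.length →
    w.rotate d = w → w = (List.replicate (w.length / d) (w.take d)).flatten := by
  intro w d hd hdvd hrot
  obtain ⟨c, hc⟩ := hdvd
  induction c generalizing w with
  | zero =>
      have : w = [] := List.length_eq_zero_iff.mp (by omega)
      subst this; simp
  | succ c ih =>
      have hdw : d ≤ w.length := by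
        rw [hc]; exact Nat.le_mul_of_pos_right _ (Nat.succ_pos c)
      have hw : w = w.take d ++ w.drop d := (List.take_append_drop d w).symm
      have hlt : (w.take d).length = d := by
        rw [List.length_take]; omega
      have hld : (w.drop d).length = d * c := by
        rw [List.length_drop, hc, Nat.mul_succ]; omega
      rcases Nat.eq_zero_or_pos c with rfl | hc0
      · -- w.length = d
        have : w.length / d = 1 := by rw [hc]; simp [Nat.mul_one, Nat.div_self hd]
        rw [this]
        simp [List.take_of_length_le (le_of_eq (by omega) : w.length ≤ d)]
      · -- c ≥ 1, so d ≤ (w.drop d).length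
        have hddrop : d ≤ (w.drop d).length := by rw [hld]; exact Nat.le_mul_of_pos_right _ hc0
        have hcomm : w.drop d ++ w.take d = w.take d ++ w.drop d := by
          rw [← List.rotate_eq_drop_append_take hdw, hrot]; exact hw
        have htake : (w.drop d).take d = w.take d := by
          have h1 := congrArg (List.take d) hcomm
          rwa [List.take_append_of_le_length hddrop,
            List.take_append_of_le_length hlt.ge, List.take_take, min_self] at h1
        have hdrop : (w.drop d).drop d ++ w.take d = w.drop d := by
          have h1 := congrArg (List.drop d) hcomm
          rwa [List.drop_append_of_le_length hddrop,
            List.drop_append_of_le_length hlt.ge, List.drop_of_length_le hlt.le,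
            List.nil_append] at h1
        have hrot' : (w.drop d).rotate d = w.drop d := by
          rw [List.rotate_eq_drop_append_take hddrop, htake, hdrop]
        have := ih (w.drop d) hrot' hld
        rw [htake] at this
        have hwlen : w.length / d = c + 1 := by rw [hc]; exact Nat.mul_div_cancel_left _ hd
        have hulen : (w.drop d).length / d = c := by rw [hld]; exact Nat.mul_div_cancel_left _ hd
        rw [hulen] at this
        rw [hwlen]
        conv_lhs => rw [hw, this]
        simp [List.replicate_succ]

lemma rotate_gcd (w : List α) (i : ℕ) (hi : 0 < i) (hilt : i < w.length)
    (h : w.rotate i = w) : w.rotate (Nat.gcd i w.length) = w := by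
  have hmul : ∀ m : ℕ, w.rotate (i * m) = w := by
    intro m
    induction m with
    | zero => simp
    | succ m ih => rw [Nat.mul_succ, ← List.rotate_rotate, ih, h]
  have hglt : Nat.gcd i w.length < w.length :=
    lt_of_le_of_lt (Nat.le_of_dvd hi (Nat.gcd_dvd_left _ _)) hilt
  obtain ⟨m, -, hm⟩ := Nat.exists_mul_mod_eq_gcd hglt
  rw [← hm, List.rotate_mod, hmul]

end Aux

/-- Every Lyndon pair is strictly ≻-greater than all of its nontrivial rotations. -/
theorem stmt5 (s n k : ℕ) (hs : 2 ≤ s) (hn : 0 < n) (hk : 0 < k)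
    (hdvd : n ∣ k ∨ k ∣ n) (w : List (Fin s)) (hw : isLyndonWord s n k w) :
    ∀ i : ℕ, 0 < i → i < max w.length k →
      succPair s k (w, (0 : ZMod k)) (rotPair s k i (w, 0)) := by
  haveI : NeZero k := ⟨hk.ne'⟩
  intro i hi hilt
  by_cases hki : k ∣ i
  · -- the interesting case: second components are equal
    have hizero : ((i : ZMod k)) = 0 := (ZMod.natCast_eq_zero_iff i k).mpr hki
    left
    refine ⟨?_, by simp [rotPair, hizero]⟩
    -- need : Lex (w.rotate i) w
    show List.Lex (· < ·) (w.rotate i) w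
    rcases hw with ⟨hkn, A, hA, hmax, hwdef⟩ | ⟨hnk, A, hA, hmax, hwdef⟩
    · -- k ∣ n case : w is the reduction of A
      set S : Set ℕ := {p : ℕ | k ∣ p ∧ p ∣ A.length ∧
        A = (List.replicate (A.length / p) (A.take p)).flatten} with hS
      have hnS : n ∈ S := by
        refine ⟨hkn, by rw [hA], ?_⟩
        rw [hA, Nat.div_self hn, List.take_of_length_le hA.le]
        simp
      have hPmem : reduceLen s k A ∈ S := Nat.sInf_mem ⟨n, hnS⟩
      set p := reduceLen s k A with hp
      obtain ⟨hkp, hpn, hArep⟩ := hPmem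
      rw [hA] at hpn
      have hppos : 0 < p := by
        rcases Nat.eq_zero_or_pos p with h0 | h; · exfalso; rw [h0] at hpn; omega
        exact h
      have hkle : k ≤ p := Nat.le_of_dvd hppos hkp
      have hwlen : w.length = p := by
        rw [hwdef, reduceWord, ← hp, List.length_take, hA]
        exact min_eq_left (Nat.le_of_dvd hn hpn)
      have hip : i < p := by
        rw [hwlen, max_eq_left hkle] at hilt; exact hilt
      -- A = w^m
      set m := n / p with hm
      have hmpos : 0 < m := Nat.div_pos (Nat.le_of_dvd hn hpn) hppos
      have hAw : A = (List.replicate m (A.take p)).flatten := by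
        rw [hm, ← hA]; exact hArep
      have hwA : w = A.take p := by rw [hwdef]; rfl
      -- maximality at i : ¬ Lex A (A.rotate i)
      have hmaxi := hmax i
      have hnotlex : ¬ List.Lex (· < ·) A (A.rotate i) := by
        intro hlex
        exact hmaxi (Or.inl ⟨hlex, by simp [rotPair, hizero]⟩)
      -- rotate of a power
      have hrotA : A.rotate i = (List.replicate m (w.rotate i)).flatten := by
        rw [hAw, rotate_flatten_replicate _ i m (by rw [← hwA, hwlen]; exact hip.le) hmpos, hwA]
      rcases lex_trichotomy (w.rotate i) w with h | h | h
      · exact h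
      · -- w.rotate i = w : contradiction with minimality of p
        exfalso
        have hrotg : w.rotate (Nat.gcd i p) = w := by
          have := rotate_gcd w i hi (by rw [hwlen]; exact hip) h
          rwa [hwlen] at this
        set d := Nat.gcd i p with hd
        have hdpos : 0 < d := Nat.gcd_pos_of_pos_left _ hi
        have hdp : d ∣ p := Nat.gcd_dvd_right _ _
        have hdlt : d < p := lt_of_le_of_lt (Nat.le_of_dvd hi (Nat.gcd_dvd_left _ _)) hip
        have hwper : w = (List.replicate (p / d) (w.take d)).flatten := by
          have := eq_flatten_of_rotate_eq w d hdpos (by rw [hwlen]; exact hdp) hrotg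
          rwa [hwlen] at this
        have hdS : d ∈ S := by
          refine ⟨Nat.dvd_gcd hki hkp, by rw [hA]; exact hdp.trans hpn, ?_⟩
          have htake : A.take d = w.take d := by
            rw [hwA, List.take_take, min_eq_left (Nat.le_of_dvd hppos hdp)]
          have key : A = (List.replicate (m * (p / d)) (A.take d)).flatten := by
            rw [htake]
            conv_lhs => rw [hAw, ← hwA, hwper]
            rw [flatten_replicate_flatten]
          have hcount : A.length / d = m * (p / d) := by
            rw [hA, ← Nat.div_mul_cancel hpn, ← hm, Nat.mul_div_assoc m hdp]
          rw [hcount]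
          exact key
        have : p ≤ d := Nat.sInf_le hdS
        omega
      · -- Lex w (w.rotate i) : contradicts maximality
        exfalso
        apply hnotlex
        rw [hrotA, hAw, ← hwA]
        exact lex_pow w (w.rotate i) h (by simp) m hmpos
    · -- n ∣ k case : w.length = k, so k ∣ i with 0 < i < k is impossible
      exfalso
      have hwlen : w.length = k := by
        rw [hwdef]
        simp [List.length_flatten, List.map_replicate, List.sum_replicate, smul_eq_mul, hA]
        rw [Nat.div_mul_cancel hnk]
      rw [hwlen, max_self] at hilt
      exact absurd (Nat.le_of_dvd hi hki) (not_le.mpr hilt)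
  · -- i not divisible by k : second component strictly smaller
    right
    show (0 : ZMod k).val < ((0 : ZMod k) + (i : ZMod k)).val
    rw [zero_add, ZMod.val_zero, ZMod.val_natCast]
    exact Nat.pos_of_ne_zero fun h0 => hki (Nat.dvd_of_mod_eq_zero h0)
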